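/- arXiv:1404.6724 — 3 statements merged into one kernel-verified Lean document; each statement's English description precedes it below -/
import Mathlib

section
/- For any finite nonempty sets A and B with i.i.d. continuous hash values, min h(A ∪ B) ∈ h(A ∩ B) if and only if min h(A) = min h(B). -/
/-- For finite nonempty sets `A`, `B` and hash values that are all distinct
(as happens almost surely for i.i.d. continuous values, modeled here by `h`
being injective on `A ∪ B`), `min h(A ∪ B) ∈ h(A ∩ B)` iff
`min h(A) = min h(B)`. -/
theorem stmt2 {U : Type*} [DecidableEq U] (h : U → ℝ) (A B : Finset U)
    (hA : A.Nonempty) (hB : B.Nonempty)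
    (hinj : Set.InjOn h (↑(A ∪ B) : Set U)) :
    (A ∪ B).inf' (hA.mono Finset.subset_union_left) h ∈ (A ∩ B).image h ↔
      A.inf' hA h = B.inf' hB h := by
  have hU : A.Nonempty := hA
  constructor
  · rintro hm
    simp only [Finset.mem_image] at hm
    obtain ⟨x, hx, hxval⟩ := hm
    rw [Finset.mem_inter] at hx
    have hle : ∀ b ∈ A ∪ B, (A ∪ B).inf' (hA.mono Finset.subset_union_left) h ≤ h b :=
      fun b hb => Finset.inf'_le h hb
    have h1 : A.inf' hA h = h x := by
      apply le_antisymm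
      · exact Finset.inf'_le h hx.1
      · rw [hxval]
        apply Finset.le_inf'
        intro b hb
        exact hle b (Finset.mem_union_left _ hb)
    have h2 : B.inf' hB h = h x := by
      apply le_antisymm
      · exact Finset.inf'_le h hx.2
      · rw [hxval]
        apply Finset.le_inf'
        intro b hb
        exact hle b (Finset.mem_union_right _ hb)
    rw [h1, h2]
  · intro heq
    obtain ⟨a, ha, hav⟩ := Finset.exists_mem_eq_inf' hA h
    obtain ⟨b, hb, hbv⟩ := Finset.exists_mem_eq_inf' hB h
    have hab : a = b := by
      apply hinj (by simp [ha]) (by simp [hb])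
      rw [← hav, ← hbv, ← heq]
    have hmem : a ∈ A ∩ B := Finset.mem_inter.2 ⟨ha, hab ▸ hb⟩
    have : (A ∪ B).inf' (hA.mono Finset.subset_union_left) h = h a := by
      apply le_antisymm
      · exact Finset.inf'_le h (Finset.mem_union_left _ ha)
      · apply Finset.le_inf'
        intro c hc
        rcases Finset.mem_union.1 hc with hc | hc
        · rw [← hav] at *; exact Finset.inf'_le h hc
        · rw [← hav, heq]; exact Finset.inf'_le h hc
    rw [this]
    exact Finset.mem_image_of_mem h hmem
end

section
/- For real numbers p ∈ [0,1] and k ≥ 0 with pk ≤ √2 − 1 and pk < 1, it holds that 1 − pk ≥ (1 − p)^{(1+pk)·k}. -/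
/-- For `p ∈ [0,1]` and `k ≥ 0` with `pk ≤ √2 − 1` and `pk < 1`, we have
`1 − pk ≥ (1 − p) ^ ((1 + pk)·k)` (real power). -/
theorem stmt3 (p k : ℝ) (hp : p ∈ Set.Icc (0:ℝ) 1) (hk : 0 ≤ k)
    (h1 : p * k ≤ Real.sqrt 2 - 1) (h2 : p * k < 1) :
    (1 - p) ^ ((1 + p * k) * k) ≤ 1 - p * k := by
  obtain ⟨hp0, hp1⟩ := hp
  set t := p * k with ht
  have ht0 : 0 ≤ t := mul_nonneg hp0 hk
  have hs2 : Real.sqrt 2 ≤ 1.415 := by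
    nlinarith [Real.sq_sqrt (by norm_num : (0:ℝ) ≤ 2), Real.sqrt_nonneg 2]
  have ht' : t ≤ 0.415 := by linarith
  rcases eq_or_lt_of_le hp1 with hpe | hplt
  · -- p = 1
    subst hpe
    have hk1 : k < 1 := by rw [ht, one_mul] at h2; exact h2
    simp only [sub_self]
    rcases eq_or_lt_of_le hk with hk0 | hkpos
    · rw [← hk0]
      simp [ht, ← hk0]
    · rw [Real.zero_rpow (show (0:ℝ) < (1+t)*k by positivity).ne']
      simp only [ht, one_mul]
      nlinarith
  · have h1p : 0 < 1 - p := by linarith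
    have hlog : Real.log (1 - p) ≤ -p := by
      have := Real.log_le_sub_one_of_pos h1p
      linarith
    have he : (0:ℝ) ≤ (1 + t) * k := by positivity
    rw [Real.rpow_def_of_pos h1p]
    have hmul : Real.log (1 - p) * ((1 + t) * k) ≤ -(t + t^2) := by
      have := mul_le_mul_of_nonneg_left hlog he
      nlinarith
    have hq := Real.quadratic_le_exp_of_nonneg (by positivity : (0:ℝ) ≤ t + t^2)
    have h3 : (1:ℝ) ≤ (1 - t) * Real.exp (t + t^2) := by nlinarith
    calc Real.exp (Real.log (1 - p) * ((1 + t) * k)) ≤ Real.exp (-(t + t^2)) :=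
          Real.exp_le_exp.mpr hmul
      _ = 1 / Real.exp (t + t^2) := by rw [Real.exp_neg, one_div]
      _ ≤ 1 - t := by rw [div_le_iff₀ (Real.exp_pos _)]; linarith
end

section
/- Suppose each key x in a set S of n keys fails to be a representative only if either (a) x lands in a designated 'query group' (probability ≤ 1/|Σ| per key), or (b) some other key lands in the same group and same bin as x (probability ≤ 1/|Σ| per other key for same group, times ℓ/n for same bin, by independence). Then E[|R|] ≥ n(1 − 1/|Σ| − (n−1)·ℓ/(n·|Σ|)) ≥ n(1 − 2ℓ/|Σ|) for ℓ ≥ 1. -/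
open MeasureTheory

/-- Expected number of representatives. `R` is a random subset of the fixed
set `S` of `n ≥ 1` keys, and each key `x ∈ S` fails to be a representative
with probability at most `1/|Σ| + (n−1)·(1/|Σ|)·(ℓ/n)` (it lands in the query
group, or some other key lands in its group and bin). Then
`E[|R|] ≥ n(1 − 1/|Σ| − (n−1)·ℓ/(n·|Σ|)) ≥ n(1 − 2ℓ/|Σ|)` for `ℓ ≥ 1`. -/
theorem stmt16 {U : Type*} [DecidableEq U]
    {Ω : Type*} [MeasurableSpace Ω] (μ : Measure Ω) [IsProbabilityMeasure μ]
    (S : Finset U) (n : ℕ) (hn : S.card = n) (hn1 : 1 ≤ n)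
    (Sig ℓ : ℝ) (hSig : 1 ≤ Sig) (hℓ : 1 ≤ ℓ)
    (R : Ω → Finset U) (hRS : ∀ ω, R ω ⊆ S)
    (hRmeas : ∀ x : U, MeasurableSet {ω | x ∈ R ω})
    (hfail : ∀ x ∈ S, (μ {ω | x ∉ R ω}).toReal ≤
      1 / Sig + (n - 1) * (1 / Sig) * (ℓ / n)) :
    (n : ℝ) * (1 - 1 / Sig - (n - 1) * ℓ / (n * Sig)) ≤
        ∫ ω, ((R ω).card : ℝ) ∂μ
    ∧ (n : ℝ) * (1 - 2 * ℓ / Sig) ≤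
        (n : ℝ) * (1 - 1 / Sig - (n - 1) * ℓ / (n * Sig)) := by
  have hS0 : 0 < (n:ℝ) := by exact_mod_cast hn1
  have hSig0 : 0 < Sig := lt_of_lt_of_le one_pos hSig
  constructor
  · -- pointwise: card = sum of indicators
    have hcard : ∀ ω, ((R ω).card : ℝ) =
        ∑ x ∈ S, Set.indicator {ω | x ∈ R ω} (fun _ => (1:ℝ)) ω := by
      intro ω
      rw [Finset.card_eq_sum_ones]
      rw [← Finset.sum_subset (hRS ω)]
      · push_cast
        apply Finset.sum_congr rfl
        intro x hx
        simp [Set.indicator_of_mem, hx, Set.mem_setOf_eq]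
      · intro x hx hnx
        simp [Set.indicator_of_notMem, hnx, Set.mem_setOf_eq]
    have hint : ∀ x : U, Integrable
        (Set.indicator {ω | x ∈ R ω} (fun _ => (1:ℝ))) μ := by
      intro x
      exact (integrable_const (1:ℝ)).indicator (hRmeas x)
    have hI : ∫ ω, ((R ω).card : ℝ) ∂μ =
        ∑ x ∈ S, (μ {ω | x ∈ R ω}).toReal := by
      calc ∫ ω, ((R ω).card : ℝ) ∂μ
          = ∫ ω, ∑ x ∈ S, Set.indicator {ω | x ∈ R ω} (fun _ => (1:ℝ)) ω ∂μ := by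
            simp_rw [hcard]
        _ = ∑ x ∈ S, ∫ ω, Set.indicator {ω | x ∈ R ω} (fun _ => (1:ℝ)) ω ∂μ :=
            integral_finset_sum S (fun x _ => hint x)
        _ = ∑ x ∈ S, (μ {ω | x ∈ R ω}).toReal := by
            apply Finset.sum_congr rfl
            intro x _
            rw [integral_indicator_const _ (hRmeas x)]
            simp
            rfl
    rw [hI]
    have key : ∀ x ∈ S, 1 - (1 / Sig + (n - 1) * (1 / Sig) * (ℓ / n)) ≤
        (μ {ω | x ∈ R ω}).toReal := by
      intro x hx
      have hc : {ω | x ∉ R ω} = {ω | x ∈ R ω}ᶜ := by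
        ext ω; simp [Set.mem_setOf_eq]
      have := hfail x hx
      rw [hc, prob_compl_eq_one_sub (hRmeas x)] at this
      have h1 : (μ {ω | x ∈ R ω}) ≤ 1 := prob_le_one
      have htop : (μ {ω | x ∈ R ω}) ≠ ⊤ := measure_ne_top _ _
      rw [ENNReal.toReal_sub_of_le h1 ENNReal.one_ne_top] at this
      simp only [ENNReal.toReal_one] at this
      linarith
    calc (n : ℝ) * (1 - 1 / Sig - (n - 1) * ℓ / (n * Sig))
        = ∑ _x ∈ S, (1 - (1 / Sig + (n - 1) * (1 / Sig) * (ℓ / n))) := by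
          rw [Finset.sum_const, hn, nsmul_eq_mul]
          field_simp
          ring
      _ ≤ ∑ x ∈ S, (μ {ω | x ∈ R ω}).toReal := Finset.sum_le_sum key
  · apply mul_le_mul_of_nonneg_left _ (le_of_lt hS0)
    have h1 : 1 / Sig ≤ ℓ / Sig := by
      gcongr
    have h2 : (n - 1 : ℝ) * ℓ / (n * Sig) ≤ ℓ / Sig := by
      rw [div_le_div_iff₀ (by positivity) hSig0]
      have : (n - 1 : ℝ) ≤ n := by linarith
      nlinarith [le_of_lt hS0, le_trans zero_le_one hℓ]
    have : 2 * ℓ / Sig = ℓ / Sig + ℓ / Sig := by ring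
    linarith
end
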